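/- Pruning invariance: Let G be a finite directed graph (without circuits) and v a vertex of valence 1, incident to the unique edge e. Then N(G) = N(G \ {v}), where G \ {v} is the induced graph on the remaining vertices. -/

import Mathlib

open scoped BigOperators

/-- The field of rational functions in variables indexed by `V` over `ℚ`. -/
abbrev K (V : Type) : Type := FractionRing (MvPolynomial V ℚ)

/-- The variable `x_v` seen inside the field of rational functions. -/
noncomputable def xv {V : Type} (v : V) : K V :=
  algebraMap (MvPolynomial V ℚ) (K V) (MvPolynomial.X v)

/-- `ψ_w = 1 / ∏ (x_{w_i} - x_{w_{i+1}})` for a word `w`. -/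
noncomputable def psi {V : Type} (w : List V) : K V :=
  (((w.zip w.tail).map fun p => xv p.1 - xv p.2).prod)⁻¹

/-- The word (list of vertices) associated to an enumeration `σ` of the vertex set `W`. -/
def wordOf {V : Type} (W : Finset V) (σ : Fin W.card ≃ W) : List V :=
  (List.finRange W.card).map fun i => ((σ i : W) : V)

/-- `σ` enumerates `W` in an order compatible with all edges of `E`:
the origin of every edge appears before its end. -/
def IsExt {V : Type} (W : Finset V) (E : Finset (V × V)) (σ : Fin W.card ≃ W) : Prop :=
  ∀ e ∈ E, ∃ i j : Fin W.card, i < j ∧ ((σ i : W) : V) = e.1 ∧ ((σ j : W) : V) = e.2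

instance {V : Type} [DecidableEq V] (W : Finset V) (E : Finset (V × V)) (σ : Fin W.card ≃ W) :
    Decidable (IsExt W E σ) := by unfold IsExt; exact inferInstance

/-- `Ψ(G) = Σ_{w ∈ L(G)} ψ_w`, the sum over linear extensions of the graph with
vertex set `W` and edge set `E`. -/
noncomputable def PsiG {V : Type} [DecidableEq V] (W : Finset V) (E : Finset (V × V)) : K V :=
  ∑ σ : Fin W.card ≃ W, if IsExt W E σ then psi (wordOf W σ) else 0

/-- `N(G) = Ψ(G) ⬝ ∏_{(a,b) ∈ E} (x_a - x_b)`. -/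
noncomputable def NG {V : Type} [DecidableEq V] (W : Finset V) (E : Finset (V × V)) : K V :=
  PsiG W E * ∏ e ∈ E, (xv e.1 - xv e.2)

/-- `φ(G)`, the formal sum of the linear extensions of `G` in the free abelian
group on words. -/
noncomputable def phiG {V : Type} [DecidableEq V] (W : Finset V) (E : Finset (V × V)) :
    List V →₀ ℤ :=
  ∑ σ : Fin W.card ≃ W, if IsExt W E σ then Finsupp.single (wordOf W σ) 1 else 0

/-- The graph has no directed circuit. -/
def Acyclic {V : Type} (E : Finset (V × V)) : Prop :=
  ∀ v : V, ¬ Relation.TransGen (fun a b => (a, b) ∈ E) v v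

/-- The underlying undirected simple graph of the directed graph with edge set `E`. -/
def undirected {V : Type} (E : Finset (V × V)) : SimpleGraph V :=
  SimpleGraph.fromRel fun a b => (a, b) ∈ E

/-- The cyclically-consecutive pairs of a list of vertices. -/
def cyclePairs {V : Type} [DecidableEq V] (vs : List V) : Finset (V × V) :=
  Finset.image (fun i : Fin vs.length => (vs.get i, vs.get (finRotate _ i))) Finset.univ

/-- `vs` is (the vertex list of) a cycle of the graph `E`, whose set of forward
edges (edges traversed in their graph orientation) is `HE`. -/
def IsCycle {V : Type} [DecidableEq V] (E : Finset (V × V)) (vs : List V)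
    (HE : Finset (V × V)) : Prop :=
  2 ≤ vs.length ∧ vs.Nodup ∧ HE ⊆ cyclePairs vs ∧ HE ⊆ E ∧
    ∀ p ∈ cyclePairs vs, p ∉ HE → (p.2, p.1) ∈ E

namespace Pruning
set_option linter.unusedSectionVars false

variable {V : Type} [DecidableEq V]

/-- The product of the differences of consecutive variables along a word,
defined by structural recursion. -/
noncomputable def Q : List V → K V
  | [] => 1
  | [_] => 1
  | x :: y :: l => (xv x - xv y) * Q (y :: l)

@[simp] lemma Q_nil : Q ([] : List V) = 1 := rfl
@[simp] lemma Q_single (x : V) : Q [x] = 1 := rfl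
@[simp] lemma Q_cons_cons (x y : V) (l : List V) :
    Q (x :: y :: l) = (xv x - xv y) * Q (y :: l) := rfl

lemma psi_eq_Q : ∀ l : List V, psi l = (Q l)⁻¹
  | [] => by simp [psi]
  | [x] => by simp [psi]
  | x :: y :: l => by
    have h := psi_eq_Q (y :: l)
    simp only [psi, List.tail_cons, List.zip_cons_cons, List.map_cons, List.prod_cons] at h ⊢
    rw [mul_inv, h, Q_cons_cons, mul_inv]

lemma xv_injective : Function.Injective (xv (V := V)) := by
  intro a b hab
  have h1 : Function.Injective (algebraMap (MvPolynomial V ℚ) (K V)) :=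
    IsFractionRing.injective _ _
  exact MvPolynomial.X_injective (h1 hab)

lemma xv_sub_ne_zero {a b : V} (h : a ≠ b) : xv a - xv b ≠ 0 :=
  sub_ne_zero.mpr (fun hh => h (xv_injective hh))

/-- Every element of `permutations'Aux v u` is a permutation of `v :: u`. -/
lemma perm_of_mem_aux {v : V} : ∀ {u w : List V}, w ∈ List.permutations'Aux v u → w.Perm (v :: u)
  | [], w, hw => by simp [List.permutations'Aux] at hw; simp [hw]
  | y :: u', w, hw => by
    simp only [List.permutations'Aux, List.mem_cons, List.mem_map] at hw
    rcases hw with rfl | ⟨w', hw', rfl⟩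
    · exact List.Perm.refl _
    · exact ((perm_of_mem_aux hw').cons y).trans (List.Perm.swap v y u')

/-- `u` is a sublist of every element of `permutations'Aux v u`. -/
lemma sublist_of_mem_aux {v : V} : ∀ {u w : List V}, w ∈ List.permutations'Aux v u → u.Sublist w
  | [], w, hw => by simp
  | y :: u', w, hw => by
    simp only [List.permutations'Aux, List.mem_cons, List.mem_map] at hw
    rcases hw with rfl | ⟨w', hw', rfl⟩
    · exact (List.sublist_cons_self _ _)
    · exact (sublist_of_mem_aux hw').cons₂ y

/-- Removing `v` from an element of `permutations'Aux v u` gives back `u`. -/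
lemma filter_of_mem_aux {v : V} : ∀ {u w : List V}, v ∉ u → w ∈ List.permutations'Aux v u →
    w.filter (fun x => x ≠ v) = u
  | [], w, _, hw => by simp [List.permutations'Aux] at hw; simp [hw]
  | y :: u', w, hvu, hw => by
    simp only [List.permutations'Aux, List.mem_cons, List.mem_map] at hw
    have hyv : y ≠ v := fun h => hvu (h ▸ List.mem_cons_self)
    have hvu' : v ∉ u' := fun h => hvu (List.mem_cons_of_mem _ h)
    rcases hw with rfl | ⟨w', hw', rfl⟩
    · rw [List.filter_cons_of_neg (by simp)]
      rw [List.filter_eq_self.2]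
      intro a ha
      simp only [ne_eq, decide_eq_true_eq]
      exact fun h => hvu (h ▸ ha)
    · rw [List.filter_cons_of_pos (by simpa using hyv), filter_of_mem_aux hvu' hw']

end Pruning
namespace Pruning
set_option linter.unusedSectionVars false
variable {V : Type} [DecidableEq V]

lemma not_sublist_head {x y : V} {L : List V} (hy : y ∉ L) (hxy : x ≠ y) :
    ¬ ([x, y].Sublist (y :: L)) := by
  intro h
  rcases List.sublist_cons_iff.mp h with h' | ⟨r, hr, _⟩
  · exact hy (h'.subset (by simp))
  · exact hxy (by injection hr)

lemma sublist_cons_of_ne {x y c : V} {L : List V} (hc : c ≠ x) :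
    [x, y].Sublist (c :: L) ↔ [x, y].Sublist L := by
  constructor
  · intro h
    rcases List.sublist_cons_iff.mp h with h' | ⟨r, hr, _⟩
    · exact h'
    · exact absurd (by injection hr) (Ne.symm hc)
  · exact fun h => h.cons c

/-- Telescoping: summing `1/Q(z :: w)` over all insertions `w` of a fresh variable `v`
into `t` gives `1/((x_z - x_v) Q(z :: t))`. -/
lemma sum_aux_total (v : V) : ∀ (t : List V) (z : V), v ∉ t → v ≠ z → z ∉ t → t.Nodup →
    ((List.permutations'Aux v t).map fun m => (Q (z :: m))⁻¹).sum
      = (xv z - xv v)⁻¹ * (Q (z :: t))⁻¹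
  | [], z, _, hvz, _, _ => by
    simp [List.permutations'Aux, mul_inv]
  | y :: t', z, hvt, hvz, hzt, hnd => by
    have hvy : v ≠ y := fun h => hvt (h ▸ List.mem_cons_self)
    have hzy : z ≠ y := fun h => hzt (h ▸ List.mem_cons_self)
    have hvt' : v ∉ t' := fun h => hvt (List.mem_cons_of_mem _ h)
    have hyt' : y ∉ t' := (List.nodup_cons.mp hnd).1
    have ih := sum_aux_total v t' y hvt' hvy hyt' (List.nodup_cons.mp hnd).2
    simp only [List.permutations'Aux, List.map_cons, List.map_map, List.sum_cons]
    have hre : ((List.permutations'Aux v t').map ((fun m => (Q (z :: m))⁻¹) ∘ (y :: ·))).sum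
        = ((List.permutations'Aux v t').map fun m => (xv z - xv y)⁻¹ * (Q (y :: m))⁻¹).sum := by
      congr 1
      apply List.map_congr_left
      intro w _
      simp only [Function.comp, Q_cons_cons, mul_inv]
    rw [hre, List.sum_map_mul_left, ih]
    have h1 : xv z - xv v ≠ 0 := xv_sub_ne_zero hvz.symm
    have h2 : xv v - xv y ≠ 0 := xv_sub_ne_zero hvy
    have h3 : xv z - xv y ≠ 0 := xv_sub_ne_zero hzy
    have h2' : xv y - xv v ≠ 0 := xv_sub_ne_zero hvy.symm
    have key : (xv z - xv v)⁻¹ * (xv v - xv y)⁻¹ + (xv z - xv y)⁻¹ * (xv y - xv v)⁻¹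
        = (xv z - xv v)⁻¹ * (xv z - xv y)⁻¹ := by
      field_simp
      ring
    calc (Q (z :: v :: y :: t'))⁻¹
          + (xv z - xv y)⁻¹ * ((xv y - xv v)⁻¹ * (Q (y :: t'))⁻¹)
        = ((xv z - xv v)⁻¹ * (xv v - xv y)⁻¹ + (xv z - xv y)⁻¹ * (xv y - xv v)⁻¹)
            * (Q (y :: t'))⁻¹ := by
          simp only [Q_cons_cons, mul_inv]; ring
      _ = (xv z - xv v)⁻¹ * (Q (z :: y :: t'))⁻¹ := by
          rw [key]; simp only [Q_cons_cons, mul_inv]; ring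

end Pruning
namespace Pruning
set_option linter.unusedSectionVars false
variable {V : Type} [DecidableEq V]

/-- Prefix version of the main telescoping lemma for an edge `(a, v)` into `v`. -/
lemma main1' (v a : V) (hav : a ≠ v) : ∀ (u : List V) (z : V), a ∈ u → v ∉ u → z ∉ u →
    v ≠ z → u.Nodup →
    ((List.permutations'Aux v u).map fun w =>
        if [a, v].Sublist w then (Q (z :: w))⁻¹ else 0).sum
      = (xv a - xv v)⁻¹ * (Q (z :: u))⁻¹
  | [], z, ha, _, _, _, _ => absurd ha List.not_mem_nil
  | y :: u', z, ha, hvu, hzu, hvz, hnd => by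
    have hvy : v ≠ y := fun h => hvu (h ▸ List.mem_cons_self)
    have hzy : z ≠ y := fun h => hzu (h ▸ List.mem_cons_self)
    have hvu' : v ∉ u' := fun h => hvu (List.mem_cons_of_mem _ h)
    have hzu' : z ∉ u' := fun h => hzu (List.mem_cons_of_mem _ h)
    have hyu' : y ∉ u' := (List.nodup_cons.mp hnd).1
    have hnd' : u'.Nodup := (List.nodup_cons.mp hnd).2
    simp only [List.permutations'Aux, List.map_cons, List.map_map, List.sum_cons]
    rw [if_neg (not_sublist_head hvu hav)]
    rcases eq_or_ne y a with rfl | hya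
    · -- the head of `u` is `a`: all insertions into `u'` are valid
      have hre : ((List.permutations'Aux v u').map
            ((fun w => if [y, v].Sublist w then (Q (z :: w))⁻¹ else 0) ∘ (y :: ·))).sum
          = ((List.permutations'Aux v u').map fun m =>
              (xv z - xv y)⁻¹ * (Q (y :: m))⁻¹).sum := by
        congr 1
        apply List.map_congr_left
        intro w hw
        have hvw : v ∈ w := (perm_of_mem_aux hw).mem_iff.mpr (List.mem_cons_self)
        have hsub : [y, v].Sublist (y :: w) :=
          (List.singleton_sublist.mpr hvw).cons₂ y
        simp only [Function.comp, if_pos hsub, Q_cons_cons, mul_inv]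
      rw [hre, List.sum_map_mul_left, sum_aux_total v u' y hvu' hvy hyu' hnd']
      simp only [Q_cons_cons, mul_inv]
      ring
    · -- the head of `u` is not `a`
      have ha' : a ∈ u' := by
        rcases List.mem_cons.mp ha with h | h
        · exact absurd h.symm hya
        · exact h
      have hre : ((List.permutations'Aux v u').map
            ((fun w => if [a, v].Sublist w then (Q (z :: w))⁻¹ else 0) ∘ (y :: ·))).sum
          = ((List.permutations'Aux v u').map fun w =>
              (xv z - xv y)⁻¹ * (if [a, v].Sublist w then (Q (y :: w))⁻¹ else 0)).sum := by
        congr 1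
        apply List.map_congr_left
        intro w hw
        simp only [Function.comp, sublist_cons_of_ne hya]
        by_cases h : [a, v].Sublist w
        · simp only [if_pos h, Q_cons_cons, mul_inv]
        · simp only [if_neg h, mul_zero]
      rw [hre, List.sum_map_mul_left,
        main1' v a hav u' y ha' hvu' hyu' hvy hnd']
      simp only [Q_cons_cons, mul_inv, zero_add]
      ring

/-- Main telescoping lemma for the edge `(a, v)`: summing `1/Q` over all valid insertions
of `v` into `u` (those where `v` comes after `a`). -/
lemma main1 (v a : V) (hav : a ≠ v) (u : List V) (ha : a ∈ u) (hvu : v ∉ u)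
    (hnd : u.Nodup) :
    ((List.permutations'Aux v u).map fun w =>
        if [a, v].Sublist w then (Q w)⁻¹ else 0).sum
      = (xv a - xv v)⁻¹ * (Q u)⁻¹ := by
  match u, ha with
  | y :: u', ha =>
    have hvy : v ≠ y := fun h => hvu (h ▸ List.mem_cons_self)
    have hvu' : v ∉ u' := fun h => hvu (List.mem_cons_of_mem _ h)
    have hyu' : y ∉ u' := (List.nodup_cons.mp hnd).1
    have hnd' : u'.Nodup := (List.nodup_cons.mp hnd).2
    simp only [List.permutations'Aux, List.map_cons, List.map_map, List.sum_cons]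
    rw [if_neg (not_sublist_head hvu hav)]
    rcases eq_or_ne y a with rfl | hya
    · have hre : ((List.permutations'Aux v u').map
            ((fun w => if [y, v].Sublist w then (Q w)⁻¹ else 0) ∘ (y :: ·))).sum
          = ((List.permutations'Aux v u').map fun m => (Q (y :: m))⁻¹).sum := by
        congr 1
        apply List.map_congr_left
        intro w hw
        have hvw : v ∈ w := (perm_of_mem_aux hw).mem_iff.mpr (List.mem_cons_self)
        simp only [Function.comp, if_pos ((List.singleton_sublist.mpr hvw).cons₂ y)]
      rw [hre, sum_aux_total v u' y hvu' hvy hyu' hnd', zero_add]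
    · have ha' : a ∈ u' := by
        rcases List.mem_cons.mp ha with h | h
        · exact absurd h.symm hya
        · exact h
      have hre : ((List.permutations'Aux v u').map
            ((fun w => if [a, v].Sublist w then (Q w)⁻¹ else 0) ∘ (y :: ·))).sum
          = ((List.permutations'Aux v u').map fun w =>
              if [a, v].Sublist w then (Q (y :: w))⁻¹ else 0).sum := by
        congr 1
        apply List.map_congr_left
        intro w hw
        simp only [Function.comp, sublist_cons_of_ne hya]
      rw [hre, main1' v a hav u' y ha' hvu' hyu' hvy hnd', zero_add]

end Pruning
namespace Pruning
set_option linter.unusedSectionVars false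
variable {V : Type} [DecidableEq V]

/-- Prefix version of the main telescoping lemma for an edge `(v, b)` out of `v`. -/
lemma main2' (v b : V) (hvb : v ≠ b) : ∀ (u : List V) (z : V), b ∈ u → v ∉ u → z ∉ u →
    v ≠ z → u.Nodup →
    ((List.permutations'Aux v u).map fun w =>
        if [v, b].Sublist w then (Q (z :: w))⁻¹ else 0).sum
      = (xv z - xv b) * ((xv z - xv v) * (xv v - xv b))⁻¹ * (Q (z :: u))⁻¹
  | [], z, hb, _, _, _, _ => absurd hb List.not_mem_nil
  | y :: u', z, hb, hvu, hzu, hvz, hnd => by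
    have hvy : v ≠ y := fun h => hvu (h ▸ List.mem_cons_self)
    have hzy : z ≠ y := fun h => hzu (h ▸ List.mem_cons_self)
    have hvu' : v ∉ u' := fun h => hvu (List.mem_cons_of_mem _ h)
    have hzu' : z ∉ u' := fun h => hzu (List.mem_cons_of_mem _ h)
    have hyu' : y ∉ u' := (List.nodup_cons.mp hnd).1
    have hnd' : u'.Nodup := (List.nodup_cons.mp hnd).2
    have h1 : xv z - xv v ≠ 0 := xv_sub_ne_zero hvz.symm
    have h2 : xv v - xv b ≠ 0 := xv_sub_ne_zero hvb
    simp only [List.permutations'Aux, List.map_cons, List.map_map, List.sum_cons]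
    rcases eq_or_ne y b with rfl | hyb
    · -- head of `u` is `b`: only inserting `v` first is valid
      have hzb : z ≠ y := hzy
      have hsub : [v, y].Sublist (v :: y :: u') :=
        (List.singleton_sublist.mpr (List.mem_cons_self)).cons₂ v
      rw [if_pos hsub]
      have hre : ((List.permutations'Aux v u').map
            ((fun w => if [v, y].Sublist w then (Q (z :: w))⁻¹ else 0) ∘ (y :: ·))).sum
          = ((List.permutations'Aux v u').map fun _ => (0 : K V)).sum := by
        congr 1
        apply List.map_congr_left
        intro w hw
        have hbw : y ∉ w := fun h =>
          (by simpa using (perm_of_mem_aux hw).mem_iff.mp h : y = v ∨ y ∈ u').elim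
            (fun h' => hvy h'.symm) hyu'
        simp only [Function.comp, if_neg (not_sublist_head hbw hvb)]
      rw [hre]
      simp only [List.map_const', List.sum_replicate, smul_zero, add_zero,
        Q_cons_cons, mul_inv]
      have h3 : xv z - xv y ≠ 0 := xv_sub_ne_zero hzy
      generalize (Q (y :: u'))⁻¹ = q
      field_simp
    · -- head of `u` is not `b`
      have hb' : b ∈ u' := by
        rcases List.mem_cons.mp hb with h | h
        · exact absurd h.symm hyb
        · exact h
      have hvb' : v ≠ b := hvb
      have hsub : [v, b].Sublist (v :: y :: u') :=
        (List.singleton_sublist.mpr (List.mem_cons_of_mem _ hb')).cons₂ v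
      rw [if_pos hsub]
      have hre : ((List.permutations'Aux v u').map
            ((fun w => if [v, b].Sublist w then (Q (z :: w))⁻¹ else 0) ∘ (y :: ·))).sum
          = ((List.permutations'Aux v u').map fun w =>
              (xv z - xv y)⁻¹ * (if [v, b].Sublist w then (Q (y :: w))⁻¹ else 0)).sum := by
        congr 1
        apply List.map_congr_left
        intro w hw
        simp only [Function.comp, sublist_cons_of_ne hvy.symm]
        by_cases h : [v, b].Sublist w
        · simp only [if_pos h, Q_cons_cons, mul_inv]
        · simp only [if_neg h, mul_zero]
      rw [hre, List.sum_map_mul_left,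
        main2' v b hvb u' y hb' hvu' hyu' hvy hnd']
      have h3 : xv z - xv y ≠ 0 := xv_sub_ne_zero hzy
      have h4 : xv y - xv v ≠ 0 := xv_sub_ne_zero hvy.symm
      have h5 : xv y - xv b ≠ 0 := xv_sub_ne_zero hyb
      have h6 : xv z - xv b ≠ 0 := xv_sub_ne_zero (fun h => hzu (h ▸ List.mem_cons_of_mem _ hb'))
      have h4' : xv v - xv y ≠ 0 := xv_sub_ne_zero hvy
      have key : (xv z - xv v)⁻¹ * (xv v - xv y)⁻¹
            + (xv z - xv y)⁻¹ * ((xv y - xv b) * ((xv y - xv v)⁻¹ * (xv v - xv b)⁻¹))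
          = (xv z - xv b) * ((xv z - xv v)⁻¹ * (xv v - xv b)⁻¹) * (xv z - xv y)⁻¹ := by
        field_simp
        ring
      simp only [Q_cons_cons, mul_inv]
      generalize (Q (y :: u'))⁻¹ = q
      linear_combination q * key

/-- Main telescoping lemma for the edge `(v, b)`. -/
lemma main2 (v b : V) (hvb : v ≠ b) (u : List V) (hb : b ∈ u) (hvu : v ∉ u)
    (hnd : u.Nodup) :
    ((List.permutations'Aux v u).map fun w =>
        if [v, b].Sublist w then (Q w)⁻¹ else 0).sum
      = (xv v - xv b)⁻¹ * (Q u)⁻¹ := by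
  match u, hb with
  | y :: u', hb =>
    have hvy : v ≠ y := fun h => hvu (h ▸ List.mem_cons_self)
    have hvu' : v ∉ u' := fun h => hvu (List.mem_cons_of_mem _ h)
    have hyu' : y ∉ u' := (List.nodup_cons.mp hnd).1
    have hnd' : u'.Nodup := (List.nodup_cons.mp hnd).2
    have h2 : xv v - xv b ≠ 0 := xv_sub_ne_zero hvb
    simp only [List.permutations'Aux, List.map_cons, List.map_map, List.sum_cons]
    rcases eq_or_ne y b with rfl | hyb
    · have hsub : [v, y].Sublist (v :: y :: u') :=
        (List.singleton_sublist.mpr (List.mem_cons_self)).cons₂ v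
      rw [if_pos hsub]
      have hre : ((List.permutations'Aux v u').map
            ((fun w => if [v, y].Sublist w then (Q w)⁻¹ else 0) ∘ (y :: ·))).sum
          = ((List.permutations'Aux v u').map fun _ => (0 : K V)).sum := by
        congr 1
        apply List.map_congr_left
        intro w hw
        have hbw : y ∉ w := fun h =>
          (by simpa using (perm_of_mem_aux hw).mem_iff.mp h : y = v ∨ y ∈ u').elim
            (fun h' => hvy h'.symm) hyu'
        simp only [Function.comp, if_neg (not_sublist_head hbw hvb)]
      rw [hre]
      simp only [List.map_const', List.sum_replicate, smul_zero, add_zero,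
        Q_cons_cons, mul_inv]
    · have hb' : b ∈ u' := by
        rcases List.mem_cons.mp hb with h | h
        · exact absurd h.symm hyb
        · exact h
      have hsub : [v, b].Sublist (v :: y :: u') :=
        (List.singleton_sublist.mpr (List.mem_cons_of_mem _ hb')).cons₂ v
      rw [if_pos hsub]
      have hre : ((List.permutations'Aux v u').map
            ((fun w => if [v, b].Sublist w then (Q w)⁻¹ else 0) ∘ (y :: ·))).sum
          = ((List.permutations'Aux v u').map fun w =>
              if [v, b].Sublist w then (Q (y :: w))⁻¹ else 0).sum := by
        congr 1
        apply List.map_congr_left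
        intro w hw
        simp only [Function.comp, sublist_cons_of_ne hvy.symm]
      rw [hre, main2' v b hvb u' y hb' hvu' hyu' hvy hnd']
      have h4 : xv y - xv v ≠ 0 := xv_sub_ne_zero hvy.symm
      have h5 : xv y - xv b ≠ 0 := xv_sub_ne_zero hyb
      have h4' : xv v - xv y ≠ 0 := xv_sub_ne_zero hvy
      have key : (xv v - xv y)⁻¹ + (xv y - xv b) * ((xv y - xv v)⁻¹ * (xv v - xv b)⁻¹)
          = (xv v - xv b)⁻¹ := by
        field_simp
        ring
      simp only [Q_cons_cons, mul_inv]
      generalize (Q (y :: u'))⁻¹ = q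
      linear_combination q * key

end Pruning
namespace Pruning
set_option linter.unusedSectionVars false
variable {V : Type} [DecidableEq V]

lemma pair_sublist_iff {w : List V} {x y : V} :
    [x, y].Sublist w ↔ ∃ i j : Fin w.length, i < j ∧ w.get i = x ∧ w.get j = y := by
  constructor
  · intro h
    rw [List.sublist_iff_exists_fin_orderEmbedding_get_eq] at h
    obtain ⟨f, hf⟩ := h
    refine ⟨f ⟨0, by simp⟩, f ⟨1, by simp⟩, f.strictMono (by simp [Fin.lt_def]), ?_, ?_⟩
    · simpa using (hf ⟨0, by simp⟩).symm
    · simpa using (hf ⟨1, by simp⟩).symm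
  · rintro ⟨i, j, hij, rfl, rfl⟩
    have h1 : w.get i :: w.drop ((i : ℕ)+1) = w.drop i := List.getElem_cons_drop i.isLt
    have hlt : (j:ℕ) - ((i:ℕ)+1) < (w.drop ((i:ℕ)+1)).length := by
      simp only [List.length_drop]
      have := j.isLt
      have : (i:ℕ) < (j:ℕ) := hij
      omega
    have hmem : w.get j ∈ w.drop ((i:ℕ)+1) := by
      have hj : (w.drop ((i:ℕ)+1))[(j:ℕ)-((i:ℕ)+1)]'hlt = w.get j := by
        rw [List.getElem_drop]
        simp only [List.get_eq_getElem]
        congr 1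
        have : (i:ℕ) < (j:ℕ) := hij
        omega
      exact hj ▸ List.getElem_mem hlt
    have h2 : [w.get i, w.get j].Sublist (w.get i :: w.drop ((i:ℕ)+1)) :=
      (List.singleton_sublist.mpr hmem).cons₂ _
    have h3 : (w.get i :: w.drop ((i:ℕ)+1)).Sublist w := by
      rw [h1]; exact List.drop_sublist _ _
    exact h2.trans h3

lemma length_wordOf (W : Finset V) (σ : Fin W.card ≃ W) : (wordOf W σ).length = W.card := by
  simp [wordOf]

lemma get_wordOf (W : Finset V) (σ : Fin W.card ≃ W) (i : Fin (wordOf W σ).length) :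
    (wordOf W σ).get i = ((σ (Fin.cast (length_wordOf W σ) i) : W) : V) := by
  simp only [wordOf, List.get_eq_getElem, List.getElem_map, List.getElem_finRange]
  change (List.map (fun i => ((σ i : W) : V)) (List.finRange W.card))[i.1]'(by simpa [wordOf] using i.2) = _
  simp only [List.getElem_map, List.getElem_finRange]
  rfl

lemma nodup_wordOf (W : Finset V) (σ : Fin W.card ≃ W) : (wordOf W σ).Nodup := by
  refine List.Nodup.map ?_ (List.nodup_finRange _)
  intro i j hij
  exact σ.injective (Subtype.ext hij)

lemma toFinset_wordOf (W : Finset V) (σ : Fin W.card ≃ W) : (wordOf W σ).toFinset = W := by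
  ext x
  constructor
  · intro hx
    obtain ⟨i, -, hi⟩ := List.mem_map.mp (List.mem_toFinset.mp hx)
    exact hi ▸ (σ i).2
  · intro hx
    exact List.mem_toFinset.mpr
      (List.mem_map.mpr ⟨σ.symm ⟨x, hx⟩, List.mem_finRange _, by simp⟩)

lemma isExt_iff (W : Finset V) (E : Finset (V × V)) (σ : Fin W.card ≃ W) :
    IsExt W E σ ↔ ∀ f ∈ E, [f.1, f.2].Sublist (wordOf W σ) := by
  constructor
  · intro h f hf
    obtain ⟨i, j, hij, h1, h2⟩ := h f hf
    rw [pair_sublist_iff]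
    refine ⟨Fin.cast (length_wordOf W σ).symm i, Fin.cast (length_wordOf W σ).symm j,
      ?_, ?_, ?_⟩
    · exact hij
    · rw [get_wordOf]; exact h1
    · rw [get_wordOf]; exact h2
  · intro h f hf
    obtain ⟨i, j, hij, h1, h2⟩ := pair_sublist_iff.mp (h f hf)
    rw [get_wordOf] at h1 h2
    exact ⟨Fin.cast (length_wordOf W σ) i, Fin.cast (length_wordOf W σ) j, hij, h1, h2⟩

lemma wordOf_injective (W : Finset V) : Function.Injective (wordOf W) := by
  intro σ τ h
  ext i
  have := congrArg (fun l => l[(i : ℕ)]?) h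
  simp only [wordOf, List.getElem?_map] at this
  rw [List.getElem?_eq_getElem (by simp), Option.map_some, Option.map_some] at this
  simp only [List.getElem_finRange, Option.some.injEq] at this
  exact this

lemma mem_image_wordOf_iff (W : Finset V) (w : List V) :
    w ∈ Finset.image (wordOf W) Finset.univ ↔ w.Nodup ∧ w.toFinset = W := by
  constructor
  · rintro hw
    obtain ⟨σ, _, rfl⟩ := Finset.mem_image.mp hw
    exact ⟨nodup_wordOf W σ, toFinset_wordOf W σ⟩
  · rintro ⟨hnd, hW⟩
    have hlen : w.length = W.card := by
      rw [← hW, List.toFinset_card_of_nodup hnd]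
    have hmem : ∀ i : Fin W.card, w.get (Fin.cast hlen.symm i) ∈ W := by
      intro i
      have : w.get (Fin.cast hlen.symm i) ∈ w.toFinset :=
        List.mem_toFinset.mpr (w.get_mem _)

      rwa [hW] at this
    set f : Fin W.card → W := fun i => ⟨w.get (Fin.cast hlen.symm i), hmem i⟩ with hf
    have hinj : Function.Injective f := by
      intro i j hij
      have := (List.nodup_iff_injective_get.mp hnd) (Subtype.ext_iff.mp hij)
      simpa [Fin.ext_iff] using this
    have hbij : Function.Bijective f :=
      (Fintype.bijective_iff_injective_and_card f).mpr ⟨hinj, by simp⟩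
    refine Finset.mem_image.mpr ⟨Equiv.ofBijective f hbij, Finset.mem_univ _, ?_⟩
    apply List.ext_get (by simp [wordOf, hlen])
    intro n h1 h2
    simp only [wordOf, List.get_eq_getElem, List.getElem_map, List.getElem_finRange]
    rfl

lemma image_wordOf_eq (W : Finset V) (l : List V) (hnd : l.Nodup) (hl : l.toFinset = W) :
    Finset.image (wordOf W) Finset.univ = l.permutations'.toFinset := by
  ext w
  rw [mem_image_wordOf_iff, List.mem_toFinset, List.mem_permutations']
  constructor
  · rintro ⟨h1, h2⟩
    exact List.perm_of_nodup_nodup_toFinset_eq h1 hnd (h2.trans hl.symm)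
  · intro h
    exact ⟨h.symm.nodup hnd, (List.toFinset_eq_of_perm _ _ h).trans hl⟩

lemma PsiG_eq_sum_perms (W : Finset V) (E : Finset (V × V)) (l : List V)
    (hnd : l.Nodup) (hl : l.toFinset = W) :
    PsiG W E = (l.permutations'.map fun w =>
      if ∀ f ∈ E, [f.1, f.2].Sublist w then (Q w)⁻¹ else 0).sum := by
  classical
  have hperm : l.permutations'.Nodup :=
    (List.permutations_perm_permutations' l).nodup_iff.mp (List.nodup_permutations l hnd)
  set F : List V → K V := fun w => if ∀ f ∈ E, [f.1, f.2].Sublist w then (Q w)⁻¹ else 0 with hF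
  have step1 : ∀ σ : Fin W.card ≃ W,
      (if IsExt W E σ then psi (wordOf W σ) else 0) = F (wordOf W σ) := by
    intro σ
    rw [hF]
    beta_reduce
    by_cases h : IsExt W E σ
    · rw [if_pos h, if_pos ((isExt_iff W E σ).mp h), psi_eq_Q]
    · rw [if_neg h, if_neg (fun hh => h ((isExt_iff W E σ).mpr hh))]
  calc PsiG W E = ∑ σ : Fin W.card ≃ W, F (wordOf W σ) := by
        rw [PsiG]; exact Finset.sum_congr rfl (fun σ _ => step1 σ)
    _ = ∑ w ∈ Finset.image (wordOf W) Finset.univ, F w :=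
        (Finset.sum_image (fun x _ y _ h => wordOf_injective W h)).symm
    _ = ∑ w ∈ l.permutations'.toFinset, F w := by rw [image_wordOf_eq W l hnd hl]
    _ = (l.permutations'.map F).sum := List.sum_toFinset _ hperm

end Pruning
namespace Pruning
set_option linter.unusedSectionVars false
variable {V : Type} [DecidableEq V]

lemma sum_flatMap {α : Type} (L : List α) (f : α → List (K V)) :
    (L.flatMap f).sum = (L.map fun a => (f a).sum).sum := by
  induction L with
  | nil => simp
  | cons a L ih => simp [List.flatMap_cons, List.sum_append, ih]

lemma inner_sum (v : V) (e : V × V) (E E' : Finset (V × V))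
    (hEE : ∀ f, f ∈ E ↔ f ∈ E' ∨ f = e) (hE' : ∀ f ∈ E', f.1 ≠ v ∧ f.2 ≠ v)
    (u : List V) (hvu : v ∉ u)
    (hmain : ((List.permutations'Aux v u).map fun w =>
        if [e.1, e.2].Sublist w then (Q w)⁻¹ else 0).sum
          = (xv e.1 - xv e.2)⁻¹ * (Q u)⁻¹) :
    ((List.permutations'Aux v u).map fun w =>
        if ∀ f ∈ E, [f.1, f.2].Sublist w then (Q w)⁻¹ else 0).sum
      = if ∀ f ∈ E', [f.1, f.2].Sublist u then (xv e.1 - xv e.2)⁻¹ * (Q u)⁻¹ else 0 := by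
  classical
  by_cases hP : ∀ f ∈ E', [f.1, f.2].Sublist u
  · rw [if_pos hP, ← hmain]
    congr 1
    apply List.map_congr_left
    intro w hw
    have hiff : (∀ f ∈ E, [f.1, f.2].Sublist w) ↔ [e.1, e.2].Sublist w := by
      constructor
      · intro h
        exact h e ((hEE e).mpr (Or.inr rfl))
      · intro h f hf
        rcases (hEE f).mp hf with hf' | rfl
        · exact (hP f hf').trans (sublist_of_mem_aux hw)
        · exact h
    by_cases h : [e.1, e.2].Sublist w
    · rw [if_pos (hiff.mpr h), if_pos h]
    · rw [if_neg (fun hh => h (hiff.mp hh)), if_neg h]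
  · rw [if_neg hP]
    have hz : ∀ w ∈ List.permutations'Aux v u,
        (if ∀ f ∈ E, [f.1, f.2].Sublist w then (Q w)⁻¹ else 0) = 0 := by
      intro w hw
      rw [if_neg]
      intro hh
      apply hP
      intro f hf
      have h1 : [f.1, f.2].Sublist w := hh f ((hEE f).mpr (Or.inl hf))
      have h2 := h1.filter (fun x => x ≠ v)
      rw [filter_of_mem_aux hvu hw] at h2
      have h3 : [f.1, f.2].filter (fun x => x ≠ v) = [f.1, f.2] := by
        simp [(hE' f hf).1, (hE' f hf).2]
      rwa [h3] at h2
    rw [List.map_congr_left hz]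
    simp

lemma PsiG_prune (W : Finset V) (E E' : Finset (V × V)) (v : V) (hv : v ∈ W) (e : V × V)
    (hEE : ∀ f, f ∈ E ↔ f ∈ E' ∨ f = e) (hE' : ∀ f ∈ E', f.1 ≠ v ∧ f.2 ≠ v)
    (hcase : (e.2 = v ∧ e.1 ≠ v ∧ e.1 ∈ W.erase v) ∨ (e.1 = v ∧ e.2 ≠ v ∧ e.2 ∈ W.erase v)) :
    PsiG W E = (xv e.1 - xv e.2)⁻¹ * PsiG (W.erase v) E' := by
  classical
  set l₁ := (W.erase v).toList with hl₁def
  have hnd₁ : l₁.Nodup := Finset.nodup_toList _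
  have hl₁ : l₁.toFinset = W.erase v := Finset.toList_toFinset _
  have hvl₁ : v ∉ l₁ := by
    rw [← List.mem_toFinset, hl₁]
    simp
  have hl₀ : (v :: l₁).toFinset = W := by
    rw [List.toFinset_cons, hl₁, Finset.insert_erase hv]
  have hnd₀ : (v :: l₁).Nodup := List.nodup_cons.mpr ⟨hvl₁, hnd₁⟩
  rw [PsiG_eq_sum_perms W E (v :: l₁) hnd₀ hl₀,
      PsiG_eq_sum_perms (W.erase v) E' l₁ hnd₁ hl₁]
  have hperm : (v :: l₁).permutations'
      = l₁.permutations'.flatMap (List.permutations'Aux v) := rfl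
  rw [hperm, List.map_flatMap, sum_flatMap]
  have hstep : ∀ u ∈ l₁.permutations',
      ((List.permutations'Aux v u).map fun w =>
        if ∀ f ∈ E, [f.1, f.2].Sublist w then (Q w)⁻¹ else 0).sum
      = (xv e.1 - xv e.2)⁻¹
          * (if ∀ f ∈ E', [f.1, f.2].Sublist u then (Q u)⁻¹ else 0) := by
    intro u hu
    have hul : u.Perm l₁ := List.mem_permutations'.mp hu
    have hndu : u.Nodup := hul.symm.nodup hnd₁
    have hvu : v ∉ u := fun h => hvl₁ (hul.mem_iff.mp h)
    have hut : u.toFinset = W.erase v := (List.toFinset_eq_of_perm _ _ hul).trans hl₁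
    have hmain : ((List.permutations'Aux v u).map fun w =>
        if [e.1, e.2].Sublist w then (Q w)⁻¹ else 0).sum
          = (xv e.1 - xv e.2)⁻¹ * (Q u)⁻¹ := by
      rcases hcase with ⟨h2v, h1v, h1m⟩ | ⟨h1v, h2v, h2m⟩
      · have hmem : e.1 ∈ u := by
          rw [← List.mem_toFinset, hut]
          exact h1m
        have := main1 v e.1 h1v u hmem hvu hndu
        rw [h2v]
        exact this
      · have hmem : e.2 ∈ u := by
          rw [← List.mem_toFinset, hut]
          exact h2m
        have := main2 v e.2 (fun h => h2v h.symm) u hmem hvu hndu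
        rw [h1v]
        exact this
    rw [inner_sum v e E E' hEE hE' u hvu hmain]
    by_cases h : ∀ f ∈ E', [f.1, f.2].Sublist u
    · rw [if_pos h, if_pos h]
    · rw [if_neg h, if_neg h, mul_zero]
  rw [List.map_congr_left hstep, List.sum_map_mul_left]

end Pruning
/-- pruning invariance.  If `v` is a vertex of valence 1 of a circuit-free
graph, incident to the unique edge `e`, then `N(G) = N(G \ {v})`. -/
theorem pruning_invariance (V : Type) [Fintype V] [DecidableEq V]
    (W : Finset V) (E : Finset (V × V)) (hEW : ∀ e ∈ E, e.1 ∈ W ∧ e.2 ∈ W)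
    (hacyc : Acyclic E) (v : V) (hv : v ∈ W) (e : V × V) (he : e ∈ E)
    (hval : E.filter (fun f => f.1 = v ∨ f.2 = v) = {e}) :
    NG W E = NG (W.erase v) (E.filter fun f => f.1 ≠ v ∧ f.2 ≠ v) := by
  classical
  set E' : Finset (V × V) := E.filter (fun f => f.1 ≠ v ∧ f.2 ≠ v) with hE'def
  -- basic facts about `e`
  have he12 : e.1 ≠ e.2 := by
    intro h
    have hh : (e.1, e.2) ∈ E := by
      rw [Prod.mk.eta]
      exact he
    rw [← h] at hh
    exact hacyc e.1 (Relation.TransGen.single hh)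
  have hee : e ∈ E.filter (fun f => f.1 = v ∨ f.2 = v) := by
    rw [hval]
    exact Finset.mem_singleton_self e
  have hor : e.1 = v ∨ e.2 = v := (Finset.mem_filter.mp hee).2
  have hmem_e : ∀ f, f ∈ E → (f.1 = v ∨ f.2 = v) → f = e := by
    intro f hf hfv
    have : f ∈ E.filter (fun f => f.1 = v ∨ f.2 = v) := Finset.mem_filter.mpr ⟨hf, hfv⟩
    rwa [hval, Finset.mem_singleton] at this
  have hE' : ∀ f ∈ E', f.1 ≠ v ∧ f.2 ≠ v := by
    intro f hf
    exact (Finset.mem_filter.mp hf).2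
  have heE' : e ∉ E' := by
    intro h
    rcases hor with h1 | h2
    · exact (hE' e h).1 h1
    · exact (hE' e h).2 h2
  have hEE : ∀ f, f ∈ E ↔ f ∈ E' ∨ f = e := by
    intro f
    constructor
    · intro hf
      by_cases hfv : f.1 = v ∨ f.2 = v
      · exact Or.inr (hmem_e f hf hfv)
      · push_neg at hfv
        exact Or.inl (Finset.mem_filter.mpr ⟨hf, hfv⟩)
    · rintro (hf | rfl)
      · exact Finset.filter_subset _ _ hf
      · exact he
  have hcase : (e.2 = v ∧ e.1 ≠ v ∧ e.1 ∈ W.erase v)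
      ∨ (e.1 = v ∧ e.2 ≠ v ∧ e.2 ∈ W.erase v) := by
    rcases hor with h1 | h2
    · right
      have h2v : e.2 ≠ v := fun h => he12 (h1.trans h.symm)
      exact ⟨h1, h2v, Finset.mem_erase.mpr ⟨h2v, (hEW e he).2⟩⟩
    · left
      have h1v : e.1 ≠ v := fun h => he12 (h.trans h2.symm)
      exact ⟨h2, h1v, Finset.mem_erase.mpr ⟨h1v, (hEW e he).1⟩⟩
  -- the edge products
  have hE'erase : E' = E.erase e := by
    ext f
    simp only [hE'def, Finset.mem_filter, Finset.mem_erase]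
    constructor
    · rintro ⟨hfE, h1, h2⟩
      refine ⟨?_, hfE⟩
      rintro rfl
      rcases hor with h | h
      exacts [h1 h, h2 h]
    · rintro ⟨hfe, hfE⟩
      refine ⟨hfE, ?_, ?_⟩
      · intro h
        exact hfe (hmem_e f hfE (Or.inl h))
      · intro h
        exact hfe (hmem_e f hfE (Or.inr h))
  have hprod : (∏ f ∈ E, (xv f.1 - xv f.2))
      = (xv e.1 - xv e.2) * ∏ f ∈ E', (xv f.1 - xv f.2) := by
    rw [hE'erase]
    exact (Finset.mul_prod_erase E _ he).symm
  have hne : xv e.1 - xv e.2 ≠ 0 := Pruning.xv_sub_ne_zero he12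
  rw [NG, NG, Pruning.PsiG_prune W E E' v hv e hEE hE' hcase, hprod]
  field_simp
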